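/- Suppose L and N are cyclic Latin squares of order n and N = L(σ_R, σ_C, σ_E) for some permutations σ_R, σ_C, σ_E ∈ S_n. Then there exist integers 0 ≤ x, j' < n with gcd(x,n) = 1 such that N = L(σ_R, m_x, m_x·τ^{j'}), where m_x(j) = jx mod n and τ(j) = j+1 mod n. -/

import Mathlib

/-- An `n × n` array on `ZMod n` is a Latin square if every row and column is a bijection. -/
def IsLatinSq (n : ℕ) (L : ZMod n → ZMod n → ZMod n) : Prop :=
  (∀ r, Function.Bijective fun c => L r c) ∧ (∀ c, Function.Bijective fun r => L r c)

/-- A Latin square is cyclic if `(r,c,e) ∈ L` implies `(r,c+1,e+1) ∈ L`. -/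
def IsCyclicSq (n : ℕ) (L : ZMod n → ZMod n → ZMod n) : Prop :=
  ∀ r c, L r (c + 1) = L r c + 1

lemma cyclic_affine {n : ℕ} [NeZero n] (L : ZMod n → ZMod n → ZMod n) (h : IsCyclicSq n L)
    (r c : ZMod n) : L r c = L r 0 + c := by
  have key : ∀ (k : ℕ), L r (k : ZMod n) = L r 0 + k := by
    intro k
    induction k with
    | zero => simp
    | succ k ih => push_cast; rw [← add_assoc, ← ih, h]
  have : ((c.val : ℕ) : ZMod n) = c := ZMod.natCast_rightInverse c
  calc L r c = L r ((c.val : ℕ) : ZMod n) := by rw [this]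
    _ = L r 0 + ((c.val : ℕ) : ZMod n) := key c.val
    _ = L r 0 + c := by rw [this]

/-- Lemma 5 (forward direction): if two cyclic Latin squares are related by an isotopism
`(σ_R, σ_C, σ_E)`, then they are related by one of the form `(σ_R, m_x, m_x·τ^{j'})`
with `gcd(x,n) = 1`. -/
theorem isotopism_of_cyclic_reduces (n : ℕ) (hn : 0 < n)
    (L N : ZMod n → ZMod n → ZMod n)
    (hLatinL : IsLatinSq n L) (hCycL : IsCyclicSq n L)
    (hLatinN : IsLatinSq n N) (hCycN : IsCyclicSq n N)
    (σR σC σE : Equiv.Perm (ZMod n))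
    (hrel : ∀ r c : ZMod n, N (σR r) (σC c) = σE (L r c)) :
    ∃ x j' : ℕ, x < n ∧ j' < n ∧ Nat.Coprime x n ∧
      ∀ r c : ZMod n, N (σR r) ((x : ZMod n) * c) = (x : ZMod n) * L r c + (j' : ZMod n) := by
  haveI : NeZero n := ⟨hn.ne'⟩
  set a : ZMod n → ZMod n := fun r => L r 0 with ha
  set b : ZMod n → ZMod n := fun r => N r 0 with hb
  have hL : ∀ r c, L r c = a r + c := fun r c => cyclic_affine L hCycL r c
  have hN : ∀ r c, N r c = b r + c := fun r c => cyclic_affine N hCycN r c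
  -- rewrite the relation
  have hrel' : ∀ r c : ZMod n, b (σR r) + σC c = σE (a r + c) := by
    intro r c
    have := hrel r c
    rwa [hN, hL] at this
  -- σE in terms of σC
  have hE : ∀ e : ZMod n, σE e = b (σR 0) + σC (e - a 0) := by
    intro e
    have := hrel' 0 (e - a 0)
    rw [add_sub_cancel] at this
    exact this.symm
  -- key equation
  have EqA : ∀ r c : ZMod n, b (σR r) + σC c = b (σR 0) + σC (a r + c - a 0) := by
    intro r c
    rw [hrel' r c, hE (a r + c), add_sub_assoc]
  -- a is surjective
  have hasurj : Function.Surjective a := (hLatinL.2 0).2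
  set x : ZMod n := σC 1 - σC 0 with hx
  have hstep : ∀ c : ZMod n, σC (c + 1) = σC c + x := by
    intro c
    obtain ⟨r, hr⟩ := hasurj (1 + a 0)
    have h1 := EqA r c
    have h2 := EqA r 0
    rw [hr] at h1 h2
    have e1 : 1 + a 0 + c - a 0 = c + 1 := by ring
    have e2 : 1 + a 0 + 0 - a 0 = (0:ZMod n) + 1 := by ring
    rw [e1] at h1
    rw [e2] at h2
    have h3 : σC (c + 1) - σC c = σC (0 + 1) - σC 0 := by
      linear_combination h2 - h1
    rw [zero_add] at h3
    linear_combination h3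
  have hC : ∀ c : ZMod n, σC c = σC 0 + c * x := by
    intro c
    have key : ∀ (k : ℕ), σC (k : ZMod n) = σC 0 + (k : ZMod n) * x := by
      intro k
      induction k with
      | zero => simp
      | succ k ih => push_cast; rw [hstep, ih]; ring
    have hv : ((c.val : ℕ) : ZMod n) = c := ZMod.natCast_rightInverse c
    calc σC c = σC ((c.val : ℕ) : ZMod n) := by rw [hv]
      _ = σC 0 + ((c.val : ℕ) : ZMod n) * x := key c.val
      _ = σC 0 + c * x := by rw [hv]
  -- x is a unit
  have hinj : Function.Injective (fun c : ZMod n => c * x) := by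
    intro c d hcd
    simp only at hcd
    have : σC c = σC d := by rw [hC c, hC d, hcd]
    exact σC.injective this
  have hsurj : Function.Surjective (fun c : ZMod n => c * x) :=
    Finite.surjective_of_injective hinj
  obtain ⟨y, hy⟩ := hsurj 1
  have hux : IsUnit x := IsUnit.of_mul_eq_one y (by rw [mul_comm]; exact hy)
  set j : ZMod n := b (σR 0) - x * a 0 with hj
  refine ⟨x.val, j.val, ZMod.val_lt x, ZMod.val_lt j, ?_, ?_⟩
  · have := ZMod.val_coe_unit_coprime hux.unit
    rwa [hux.unit_spec] at this
  · intro r c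
    have hvx : ((x.val : ℕ) : ZMod n) = x := ZMod.natCast_rightInverse x
    have hvj : ((j.val : ℕ) : ZMod n) = j := ZMod.natCast_rightInverse j
    rw [hvx, hvj, hN, hL]
    -- need: b (σR r) + x * (a r + c) ... goal: b (σR r) + x*c = x*(a r + c) + j
    have h2 := EqA r 0
    rw [add_zero, hC (a r - a 0), hC 0] at h2
    -- h2 : b (σR r) + σC 0 = b (σR 0) + (σC 0 + (a r - a 0) * x)
    rw [hj]
    linear_combination h2
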